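/- Let G be a connected finite simple graph and let u, w, v be three distinct vertices such that uw and wv are edges of G (i.e., uwv is a path in G). Then b_dR(G) ≤ deg(u) + deg(v) − 1. -/
import Mathlib


/-- A double Roman dominating function (DRDF) on a graph `G`: a function
`f : V → ℕ` taking values in `{0,1,2,3}` such that every vertex assigned `0`
has a neighbor assigned `3` or two distinct neighbors assigned `2`, and every
vertex assigned `1` has a neighbor assigned at least `2`. -/
def IsDRDF {V : Type*} (G : SimpleGraph V) (f : V → ℕ) : Prop :=
  (∀ v, f v ≤ 3) ∧
  (∀ v, f v = 0 →
    (∃ w, G.Adj v w ∧ f w = 3) ∨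
    (∃ w₁ w₂, G.Adj v w₁ ∧ G.Adj v w₂ ∧ w₁ ≠ w₂ ∧ f w₁ = 2 ∧ f w₂ = 2)) ∧
  (∀ v, f v = 1 → ∃ w, G.Adj v w ∧ 2 ≤ f w)

/-- The double Roman domination number `γ_dR(G)`: the minimum weight of a DRDF on `G`. -/
noncomputable def gammaDR {V : Type*} [Fintype V] (G : SimpleGraph V) : ℕ :=
  sInf {k | ∃ f : V → ℕ, IsDRDF G f ∧ ∑ v, f v = k}

/-- The double Roman bondage number `b_dR(G)`: the minimum cardinality of a set
`B` of edges of `G` such that `γ_dR(G - B) > γ_dR(G)`. -/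
noncomputable def bDR {V : Type*} [Fintype V] (G : SimpleGraph V) : ℕ :=
  sInf {k | ∃ B : Finset (Sym2 V), ↑B ⊆ G.edgeSet ∧ B.card = k ∧
    gammaDR G < gammaDR (G.deleteEdges ↑B)}

/-- `gammaDR` is attained by some DRDF. -/
lemma gammaDR_exists {V : Type*} [Fintype V] (H : SimpleGraph V) :
    ∃ f : V → ℕ, IsDRDF H f ∧ ∑ v, f v = gammaDR H := by
  have hne : {k | ∃ f : V → ℕ, IsDRDF H f ∧ ∑ v, f v = k}.Nonempty :=
    ⟨∑ _v : V, 3, fun _ => 3,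
      ⟨fun _ => le_rfl, fun v h => by simp at h, fun v h => by simp at h⟩, rfl⟩
  exact Nat.sInf_mem hne

lemma gammaDR_le {V : Type*} [Fintype V] (H : SimpleGraph V) (f : V → ℕ)
    (hf : IsDRDF H f) : gammaDR H ≤ ∑ v, f v :=
  Nat.sInf_le ⟨f, hf, rfl⟩

/-- If `G` is connected and `u w v` is a path in `G`, then
`b_dR(G) ≤ deg(u) + deg(v) − 1`. -/
theorem bDR_le_of_path' {V : Type*} [Fintype V]
    (G : SimpleGraph V) [DecidableRel G.Adj] (hconn : G.Connected)
    (u w v : V) (huw : G.Adj u w) (hwv : G.Adj w v) (huv : u ≠ v) :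
    (bDR G : ℤ) ≤ (G.degree u : ℤ) + G.degree v - 1 := by
  classical
  have huw' : u ≠ w := huw.ne
  have hwv' : w ≠ v := hwv.ne
  set U : Finset (Sym2 V) := G.incidenceFinset u ∪ G.incidenceFinset v with hU
  have hwvU : s(w, v) ∈ U := by
    apply Finset.mem_union_right
    rw [SimpleGraph.mem_incidenceFinset]
    exact ⟨hwv, by simp⟩
  set B : Finset (Sym2 V) := U.erase s(w, v) with hB
  have hcardB : B.card + 1 ≤ G.degree u + G.degree v := by
    have h1 : B.card + 1 = U.card := Finset.card_erase_add_one hwvU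
    have h2 : U.card ≤ (G.incidenceFinset u).card + (G.incidenceFinset v).card :=
      Finset.card_union_le _ _
    rw [SimpleGraph.card_incidenceFinset_eq_degree,
      SimpleGraph.card_incidenceFinset_eq_degree] at h2
    omega
  have hBsub : ↑B ⊆ G.edgeSet := by
    intro e he
    have : e ∈ U := Finset.mem_of_mem_erase he
    rcases Finset.mem_union.1 this with h | h
    · exact G.incidenceSet_subset u ((G.mem_incidenceFinset u e).1 h)
    · exact G.incidenceSet_subset v ((G.mem_incidenceFinset v e).1 h)
  set G' := G.deleteEdges ↑B with hG'
  have hG'le : ∀ {x y : V}, G'.Adj x y → G.Adj x y := by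
    intro x y h
    exact (SimpleGraph.deleteEdges_adj.1 h).1
  -- u is isolated in G'
  have hu_iso : ∀ y, ¬ G'.Adj u y := by
    intro y h
    rw [SimpleGraph.deleteEdges_adj] at h
    apply h.2
    rw [Finset.mem_coe, hB, Finset.mem_erase]
    constructor
    · intro hcontra
      rw [Sym2.eq_iff] at hcontra
      rcases hcontra with ⟨h1, _⟩ | ⟨h1, _⟩
      · exact huw' h1
      · exact huv h1
    · exact Finset.mem_union_left _ (by
        rw [SimpleGraph.mem_incidenceFinset]; exact ⟨h.1, by simp⟩)
  -- v's only possible neighbor in G' is w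
  have hv_w : ∀ y, G'.Adj v y → y = w := by
    intro y h
    rw [SimpleGraph.deleteEdges_adj] at h
    by_contra hyw
    apply h.2
    rw [Finset.mem_coe, hB, Finset.mem_erase]
    constructor
    · intro hcontra
      rw [Sym2.eq_iff] at hcontra
      rcases hcontra with ⟨h1, _⟩ | ⟨_, h2⟩
      · exact hwv' h1.symm
      · exact hyw h2
    · exact Finset.mem_union_right _ (by
        rw [SimpleGraph.mem_incidenceFinset]; exact ⟨h.1, by simp⟩)
  -- take a minimum DRDF on G'
  obtain ⟨f, hf, hfsum⟩ := gammaDR_exists G'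
  obtain ⟨hf3, hf0, hf1⟩ := hf
  have hfu : 2 ≤ f u := by
    by_contra hc
    push_neg at hc
    have : f u = 0 ∨ f u = 1 := by omega
    rcases this with h | h
    · rcases hf0 u h with ⟨y, hy, _⟩ | ⟨y₁, _, hy₁, _, _, _, _⟩
      · exact hu_iso y hy
      · exact hu_iso y₁ hy₁
    · rcases hf1 u h with ⟨y, hy, _⟩
      exact hu_iso y hy
  have hsum4 : 4 ≤ f u + f v + f w := by
    rcases Nat.lt_or_ge (f v) 2 with hc | hc
    · have : f v = 0 ∨ f v = 1 := by omega
      rcases this with h | h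
      · rcases hf0 v h with ⟨y, hy, hy3⟩ | ⟨y₁, y₂, hy₁, hy₂, hne, _, _⟩
        · have hw3 : f w = 3 := (hv_w y hy) ▸ hy3
          omega
        · exact absurd ((hv_w y₁ hy₁).trans (hv_w y₂ hy₂).symm) hne
      · rcases hf1 v h with ⟨y, hy, hy2⟩
        have hw2 : 2 ≤ f w := (hv_w y hy) ▸ hy2
        omega
    · omega
  -- the modified function on G
  set g : V → ℕ := fun x => if x = w then 3 else if x = u ∨ x = v then 0 else f x with hg
  have hgw : g w = 3 := by simp [hg]
  have hgu : g u = 0 := by simp [hg, huw']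
  have hgv : g v = 0 := by simp [hg, hwv'.symm, huv.symm]
  have hgother : ∀ x, x ≠ u → x ≠ v → x ≠ w → g x = f x := by
    intro x h1 h2 h3
    simp [hg, h1, h2, h3]
  -- neighbors (in G') of a vertex other than w are never u or v
  have hnbr : ∀ x y, x ≠ w → G'.Adj x y → y ≠ u ∧ y ≠ v := by
    intro x y hxw hxy
    constructor
    · rintro rfl; exact hu_iso x hxy.symm
    · rintro rfl; exact hxw (hv_w x hxy.symm)
  have hgDRDF : IsDRDF G g := by
    refine ⟨?_, ?_, ?_⟩
    · intro x
      by_cases h1 : x = w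
      · simp [h1, hgw]
      · by_cases h2 : x = u ∨ x = v
        · rcases h2 with rfl | rfl <;> simp [hgu, hgv]
        · push_neg at h2
          rw [hgother x h2.1 h2.2 h1]; exact hf3 x
    · intro x hx
      by_cases h1 : x = w
      · rw [h1, hgw] at hx; exact absurd hx (by norm_num)
      by_cases h2 : x = u
      · subst h2; exact Or.inl ⟨w, huw, hgw⟩
      by_cases h3 : x = v
      · subst h3; exact Or.inl ⟨w, hwv.symm, hgw⟩
      have hfx : f x = 0 := by rw [← hgother x h2 h3 h1]; exact hx
      rcases hf0 x hfx with ⟨y, hy, hy3⟩ | ⟨y₁, y₂, hy₁, hy₂, hne, hy₁2, hy₂2⟩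
      · obtain ⟨hyu, hyv⟩ := hnbr x y h1 hy
        by_cases hyw : y = w
        · exact Or.inl ⟨w, hyw ▸ hG'le hy, hgw⟩
        · exact Or.inl ⟨y, hG'le hy, by rw [hgother y hyu hyv hyw]; exact hy3⟩
      · obtain ⟨hy₁u, hy₁v⟩ := hnbr x y₁ h1 hy₁
        obtain ⟨hy₂u, hy₂v⟩ := hnbr x y₂ h1 hy₂
        by_cases hy₁w : y₁ = w
        · exact Or.inl ⟨w, hy₁w ▸ hG'le hy₁, hgw⟩
        by_cases hy₂w : y₂ = w
        · exact Or.inl ⟨w, hy₂w ▸ hG'le hy₂, hgw⟩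
        exact Or.inr ⟨y₁, y₂, hG'le hy₁, hG'le hy₂, hne,
          by rw [hgother y₁ hy₁u hy₁v hy₁w]; exact hy₁2,
          by rw [hgother y₂ hy₂u hy₂v hy₂w]; exact hy₂2⟩
    · intro x hx
      by_cases h1 : x = w
      · rw [h1, hgw] at hx; exact absurd hx (by norm_num)
      by_cases h2 : x = u
      · subst h2; rw [hgu] at hx; exact absurd hx (by norm_num)
      by_cases h3 : x = v
      · subst h3; rw [hgv] at hx; exact absurd hx (by norm_num)
      have hfx : f x = 1 := by rw [← hgother x h2 h3 h1]; exact hx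
      obtain ⟨y, hy, hy2⟩ := hf1 x hfx
      obtain ⟨hyu, hyv⟩ := hnbr x y h1 hy
      by_cases hyw : y = w
      · exact ⟨w, hyw ▸ hG'le hy, by rw [hgw]; omega⟩
      · exact ⟨y, hG'le hy, by rw [hgother y hyu hyv hyw]; exact hy2⟩
  -- weight comparison
  have hsumlt : ∑ x, g x < ∑ x, f x := by
    set T : Finset V := {u, v, w} with hT
    have hTcard : ∀ (h : V → ℕ), ∑ x ∈ T, h x = h u + h v + h w := by
      intro h
      rw [hT, Finset.sum_insert (by simp [huv, huw']),
        Finset.sum_insert (by simp [hwv'.symm]), Finset.sum_singleton]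
      ring
    have hsplitg := Finset.sum_sdiff (Finset.subset_univ T) (f := g)
    have hsplitf := Finset.sum_sdiff (Finset.subset_univ T) (f := f)
    have hsame : ∑ x ∈ Finset.univ \ T, g x = ∑ x ∈ Finset.univ \ T, f x := by
      apply Finset.sum_congr rfl
      intro x hx
      rw [Finset.mem_sdiff, hT] at hx
      simp only [Finset.mem_insert, Finset.mem_singleton] at hx
      push_neg at hx
      exact hgother x hx.2.1 hx.2.2.1 hx.2.2.2
    have hTg : ∑ x ∈ T, g x = 3 := by rw [hTcard g, hgu, hgv, hgw]
    have hTf : 4 ≤ ∑ x ∈ T, f x := by rw [hTcard f]; omega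
    omega
  have hlt : gammaDR G < gammaDR G' := by
    calc gammaDR G ≤ ∑ x, g x := gammaDR_le G g hgDRDF
      _ < ∑ x, f x := hsumlt
      _ = gammaDR G' := hfsum
  have hbDR : bDR G ≤ B.card := Nat.sInf_le ⟨B, hBsub, rfl, hlt⟩
  omega
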